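/- Let 0 ≤ t₀ < T, A ≥ 0, and let σ : [0,∞) → [0,∞) be monotonically increasing with σ(s) → ∞ as s → ∞. For each ν > 0 let y_ν : [t₀,T] → [0,∞) be continuously differentiable with y_ν(t₀) = 0 and y_ν'(t) ≤ A − y_ν(t)² σ(y_ν(t)/ν) for all t ∈ [t₀,T]. Then for every ε > 0 there exists ν₀ > 0 such that y_ν(t) ≤ ε for all t ∈ [t₀,T] and all 0 < ν ≤ ν₀; in particular lim_{ν→0} y_ν(T) = 0. -/

import Mathlib

open Set Filter Topology

/-- Let `0 ≤ t₀ < T`, `A ≥ 0`, and let `σ : [0,∞) → [0,∞)` be monotone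
increasing with `σ(s) → ∞` as `s → ∞`. If, for each `ν > 0`, `y_ν : [t₀,T] → [0,∞)` is
continuously differentiable with `y_ν(t₀) = 0` and
`y_ν'(t) ≤ A − y_ν(t)² σ(y_ν(t)/ν)` on `[t₀,T]`, then for every `ε > 0` there is `ν₀ > 0`
with `y_ν(t) ≤ ε` for all `t ∈ [t₀,T]` and all `0 < ν ≤ ν₀`; in particular
`y_ν(T) → 0` as `ν → 0⁺`. -/
theorem stmt5 (t₀ T A : ℝ) (ht₀ : 0 ≤ t₀) (ht₀T : t₀ < T) (hA : 0 ≤ A)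
    (σ : ℝ → ℝ)
    (hσnn : ∀ s, 0 ≤ s → 0 ≤ σ s)
    (hσmono : MonotoneOn σ (Set.Ici 0))
    (hσtop : Tendsto σ atTop atTop)
    (y y' : ℝ → ℝ → ℝ)
    (hy0 : ∀ ν, 0 < ν → y ν t₀ = 0)
    (hynn : ∀ ν, 0 < ν → ∀ t ∈ Set.Icc t₀ T, 0 ≤ y ν t)
    (hyderiv : ∀ ν, 0 < ν → ∀ t ∈ Set.Icc t₀ T,
      HasDerivWithinAt (y ν) (y' ν t) (Set.Icc t₀ T) t)
    (hy'cont : ∀ ν, 0 < ν → ContinuousOn (y' ν) (Set.Icc t₀ T))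
    (hineq : ∀ ν, 0 < ν → ∀ t ∈ Set.Icc t₀ T,
      y' ν t ≤ A - (y ν t) ^ 2 * σ (y ν t / ν)) :
    (∀ ε > 0, ∃ ν₀ > 0, ∀ ν, 0 < ν → ν ≤ ν₀ → ∀ t ∈ Set.Icc t₀ T, y ν t ≤ ε) ∧
      Tendsto (fun ν => y ν T) (𝓝[>] (0 : ℝ)) (𝓝 0) := by
  have key : ∀ ε > 0, ∃ ν₀ > 0, ∀ ν, 0 < ν → ν ≤ ν₀ → ∀ t ∈ Set.Icc t₀ T, y ν t ≤ ε := by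
    intro ε hε
    obtain ⟨S, hS⟩ := eventually_atTop.1 (hσtop.eventually_ge_atTop ((A + 1) / ε ^ 2))
    set S' : ℝ := max S 1 with hS'def
    have hS'pos : 0 < S' := lt_of_lt_of_le one_pos (le_max_right S 1)
    refine ⟨ε / S', by positivity, ?_⟩
    intro ν hν hνν₀
    by_contra hcon
    push_neg at hcon
    obtain ⟨ts, hts, hyts⟩ := hcon
    have hycont : ContinuousOn (y ν) (Set.Icc t₀ T) := fun t ht =>
      (hyderiv ν hν t ht).continuousWithinAt
    set E : Set ℝ := Set.Icc t₀ T ∩ y ν ⁻¹' Set.Ici ε with hEdef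
    have hEne : E.Nonempty := ⟨ts, hts, le_of_lt hyts⟩
    have hEclosed : IsClosed E :=
      hycont.preimage_isClosed_of_isClosed isClosed_Icc isClosed_Ici
    have hEbdd : BddBelow E := (bddBelow_Icc).mono inter_subset_left
    set t₁ : ℝ := sInf E with ht₁def
    have ht₁E : t₁ ∈ E := hEclosed.csInf_mem hEne hEbdd
    obtain ⟨ht₁Icc, ht₁ε⟩ := ht₁E
    have ht₀t₁ : t₀ < t₁ := by
      rcases lt_or_eq_of_le ht₁Icc.1 with h | h
      · exact h
      · exfalso
        have h0 : ε ≤ y ν t₀ := by rw [h]; exact ht₁ε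
        rw [hy0 ν hν] at h0; linarith
    -- y ν t₁ = ε via IVT and minimality
    have hyt₁ : y ν t₁ = ε := by
      have hsub : Set.Icc t₀ t₁ ⊆ Set.Icc t₀ T := Icc_subset_Icc_right ht₁Icc.2
      have hivt := intermediate_value_Icc (le_of_lt ht₀t₁) (hycont.mono hsub)
      have hεmem : ε ∈ Set.Icc (y ν t₀) (y ν t₁) := by
        rw [hy0 ν hν]; exact ⟨le_of_lt hε, ht₁ε⟩
      obtain ⟨t', ht'Icc, ht'val⟩ := hivt hεmem
      have ht'E : t' ∈ E := ⟨hsub ht'Icc, le_of_eq ht'val.symm⟩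
      have h1 : t₁ ≤ t' := csInf_le hEbdd ht'E
      have h2 : t' = t₁ := le_antisymm ht'Icc.2 h1
      rw [← h2, ht'val]
    -- derivative bound at t₁
    have hεν : S' ≤ ε / ν := by
      rw [le_div_iff₀ hν]
      calc S' * ν ≤ S' * (ε / S') := by
            exact mul_le_mul_of_nonneg_left hνν₀ (le_of_lt hS'pos)
        _ = ε := by field_simp
    have hσbig : (A + 1) / ε ^ 2 ≤ σ (ε / ν) :=
      hS _ (le_trans (le_max_left S 1) hεν)
    have hd : y' ν t₁ ≤ -1 := by
      have h := hineq ν hν t₁ ht₁Icc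
      rw [hyt₁] at h
      have : A + 1 ≤ ε ^ 2 * σ (ε / ν) := by
        calc A + 1 = ε ^ 2 * ((A + 1) / ε ^ 2) := by field_simp
          _ ≤ ε ^ 2 * σ (ε / ν) := by
              exact mul_le_mul_of_nonneg_left hσbig (by positivity)
      linarith
    -- slope argument: slightly to the left of t₁, y > ε, contradicting minimality
    have hder : HasDerivWithinAt (y ν) (y' ν t₁) (Set.Icc t₀ t₁) t₁ :=
      (hyderiv ν hν t₁ ht₁Icc).mono (Icc_subset_Icc_right ht₁Icc.2)
    rw [hasDerivWithinAt_iff_tendsto_slope] at hder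
    have hset : Set.Icc t₀ t₁ \ {t₁} = Set.Ico t₀ t₁ := Icc_sdiff_right
    rw [hset] at hder
    have hne : (𝓝[Set.Ico t₀ t₁] t₁).NeBot := right_nhdsWithin_Ico_neBot ht₀t₁
    have hev : ∀ᶠ t in 𝓝[Set.Ico t₀ t₁] t₁,
        slope (y ν) t₁ t < 0 ∧ t ∈ Set.Ico t₀ t₁ :=
      (hder.eventually (Iio_mem_nhds (by linarith : y' ν t₁ < (0 : ℝ)))).and
        self_mem_nhdsWithin
    obtain ⟨t, hslope, htIco⟩ := hev.exists
    have htt₁ : t < t₁ := htIco.2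
    rw [slope_def_field, hyt₁] at hslope
    have hypos : ε < y ν t := by
      rcases div_neg_iff.1 hslope with ⟨h1, _⟩ | ⟨_, h2⟩
      · linarith
      · linarith
    have htE : t ∈ E := ⟨⟨htIco.1, le_trans (le_of_lt htt₁) ht₁Icc.2⟩, le_of_lt hypos⟩
    exact absurd (csInf_le hEbdd htE) (not_le.2 htt₁)
  refine ⟨key, ?_⟩
  rw [Metric.tendsto_nhdsWithin_nhds]
  intro ε hε
  obtain ⟨ν₀, hν₀pos, hν₀⟩ := key (ε / 2) (by positivity)
  refine ⟨ν₀, hν₀pos, ?_⟩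
  intro ν hν hdist
  have hνpos : 0 < ν := hν
  have hνle : ν ≤ ν₀ := by
    rw [Real.dist_eq, sub_zero, abs_of_pos hνpos] at hdist
    exact le_of_lt hdist
  have hTmem : T ∈ Set.Icc t₀ T := ⟨le_of_lt ht₀T, le_refl T⟩
  have h1 : y ν T ≤ ε / 2 := hν₀ ν hνpos hνle T hTmem
  have h2 : 0 ≤ y ν T := hynn ν hνpos T hTmem
  rw [Real.dist_eq, sub_zero, abs_of_nonneg h2]
  linarith
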